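/- Let H be a real Hilbert space, K a nonempty subset of H, g : H → H a map whose range contains K (for every x ∈ K there exists w ∈ H with g w = x), and η : H × H → H a bifunction such that K is general invex with respect to g and η: g u + t·η(g v, g u) ∈ K for all u, v ∈ H with g u, g v ∈ K and all t ∈ [0,1]. Let F : H → ℝ be Fréchet differentiable and general preinvex: F(g u + t·η(g v, g u)) ≤ (1−t)·F(g u) + t·F(g v) for all u, v with g u, g v ∈ K and all t ∈ [0,1]. Then for u ∈ H with g u ∈ K the following are equivalent: (i) F(g u) ≤ F(x) for all x ∈ K; (ii) ⟨∇F(g u), η(g v, g u)⟩ ≥ 0 for all v ∈ H with g v ∈ K. -/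

import Mathlib

open scoped RealInnerProductSpace

private lemma line_deriv {H : Type*} [NormedAddCommGroup H] [InnerProductSpace ℝ H]
    [CompleteSpace H] {F : H → ℝ} {F' : H → H} (hF : ∀ x : H, HasGradientAt F (F' x) x)
    (a d : H) : HasDerivAt (fun t : ℝ => F (a + t • d)) ⟪F' a, d⟫ 0 := by
  have hl : HasDerivAt (fun t : ℝ => a + t • d) d 0 := by
    simpa using ((hasDerivAt_id (0:ℝ)).smul_const d).const_add a
  have hfd := (hF a).hasFDerivAt
  have hfd' : HasFDerivAt F ((InnerProductSpace.toDual ℝ H) (F' a)) (a + (0:ℝ) • d) := by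
    simpa using hfd
  have := hfd'.comp_hasDerivAt (f := fun t : ℝ => a + t • d) 0 hl
  have h2 : HasDerivAt (fun t : ℝ => F (a + t • d)) ((InnerProductSpace.toDual ℝ H) (F' a) d) 0 := this
  simpa using h2

theorem stmt_7 {H : Type*} [NormedAddCommGroup H] [InnerProductSpace ℝ H] [CompleteSpace H]
    (K : Set H) (hK : K.Nonempty)
    (g : H → H) (hg : ∀ x ∈ K, ∃ w : H, g w = x)
    (η : H → H → H)
    (hinvex : ∀ u v : H, g u ∈ K → g v ∈ K → ∀ t ∈ Set.Icc (0 : ℝ) 1,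
      g u + t • η (g v) (g u) ∈ K)
    (F : H → ℝ) (F' : H → H) (hF : ∀ x : H, HasGradientAt F (F' x) x)
    (hpre : ∀ u v : H, g u ∈ K → g v ∈ K → ∀ t ∈ Set.Icc (0 : ℝ) 1,
      F (g u + t • η (g v) (g u)) ≤ (1 - t) * F (g u) + t * F (g v))
    (u : H) (hu : g u ∈ K) :
    (∀ x ∈ K, F (g u) ≤ F x) ↔ ∀ v : H, g v ∈ K → 0 ≤ ⟪F' (g u), η (g v) (g u)⟫ := by
  constructor
  · intro hmin v hv
    set d := η (g v) (g u)
    have hd := (line_deriv hF (g u) d).tendsto_slope_zero_right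
    simp only [zero_add, zero_smul, add_zero] at hd
    refine ge_of_tendsto hd ?_
    filter_upwards [Ioo_mem_nhdsGT_of_mem (by norm_num : (0:ℝ) ∈ Set.Ico 0 1)] with t ht
    have hmem := hinvex u v hu hv t ⟨ht.1.le, ht.2.le⟩
    have h0 : F (g u) ≤ F (g u + t • d) := hmin _ hmem
    have : 0 ≤ F (g u + t • d) - F (g u) := by linarith
    have ht0 : 0 < t := ht.1
    rw [smul_eq_mul]
    positivity
  · intro hvar x hx
    obtain ⟨w, rfl⟩ := hg x hx
    set d := η (g w) (g u)
    have hd := (line_deriv hF (g u) d).tendsto_slope_zero_right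
    simp only [zero_add, zero_smul, add_zero] at hd
    have hkey : ⟪F' (g u), d⟫ ≤ F (g w) - F (g u) := by
      refine le_of_tendsto hd ?_
      filter_upwards [Ioo_mem_nhdsGT_of_mem (by norm_num : (0:ℝ) ∈ Set.Ico 0 1)] with t ht
      have hp := hpre u w hu hx t ⟨ht.1.le, ht.2.le⟩
      have ht0 : 0 < t := ht.1
      have : F (g u + t • d) - F (g u) ≤ t * (F (g w) - F (g u)) := by ring_nf; linarith
      calc t⁻¹ • (F (g u + t • d) - F (g u)) ≤ t⁻¹ * (t * (F (g w) - F (g u))) := by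
            simp only [smul_eq_mul]
            exact mul_le_mul_of_nonneg_left this (by positivity)
        _ = F (g w) - F (g u) := by field_simp
    have := hvar w hx
    linarith
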